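/- Discrete energy / energy dissipation inequality: if (c, μ) is a solution of the one-step scheme such that c_{i,K} > 0 for every K ∈ V and i ∈ {1,2}, then (E(c) − E(c⁰))/Δt + D(c,μ) ≤ 0. -/

import Mathlib

open Finset

/-- Logarithmic-mean edge value: `lm a b = a` if `a = b ≥ 0`, `0` if `min a b ≤ 0`,
and `(a - b)/(log a - log b)` otherwise. -/
noncomputable def lm (a b : ℝ) : ℝ :=
  if a = b ∧ 0 ≤ a then a
  else if min a b ≤ 0 then 0
  else (a - b) / (Real.log a - Real.log b)

/-- Entropy function `H(c) = c log c - c + 1` (note `H 0 = 1` since `Real.log 0 = 0`). -/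
noncomputable def ent (c : ℝ) : ℝ := c * Real.log c - c + 1

/-- Sum of `f L` over the neighbours `L` of `K`, i.e. over the `L` with `(K, L) ∈ E`. -/
noncomputable def nbrSum {V : Type*} [Fintype V] [DecidableEq V]
    (E : Finset (V × V)) (K : V) (f : V → ℝ) : ℝ :=
  ∑ L ∈ Finset.univ.filter (fun L => (K, L) ∈ E), f L

/-- Sum of a symmetric quantity `f K L` over the unordered edges `{K, L}`, where the
edge set `E` is recorded as a symmetric finset of ordered pairs: each unordered edge
appears as both `(K, L)` and `(L, K)`, whence the division by `2`. -/
noncomputable def edgeSum {V : Type*} (E : Finset (V × V)) (f : V → V → ℝ) : ℝ :=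
  (∑ p ∈ E, f p.1 p.2) / 2

/-- The one-step finite-volume scheme: equations (i) for both phases, (ii), (iii), (iv). -/
def OneStepScheme {V : Type*} [Fintype V] [DecidableEq V]
    (E : Finset (V × V)) (m : V → ℝ) (τ : V → V → ℝ)
    (Δt α κ η₁ η₂ θ₁ θ₂ : ℝ) (Ψ₁ Ψ₂ : V → ℝ)
    (c₁₀ c₂₀ c₁ c₂ μ₁ μ₂ : V → ℝ) : Prop :=
  (∀ K : V,
    m K * (c₁ K - c₁₀ K) / Δt
      + nbrSum E K (fun L =>
          τ K L * (lm (c₁ K) (c₁ L) / η₁ * (μ₁ K + Ψ₁ K - μ₁ L - Ψ₁ L)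
            + θ₁ * (c₁ K - c₁ L))) = 0) ∧
  (∀ K : V,
    m K * (c₂ K - c₂₀ K) / Δt
      + nbrSum E K (fun L =>
          τ K L * (lm (c₂ K) (c₂ L) / η₂ * (μ₂ K + Ψ₂ K - μ₂ L - Ψ₂ L)
            + θ₂ * (c₂ K - c₂ L))) = 0) ∧
  (∀ K : V,
    μ₁ K - μ₂ K
      = α / m K * nbrSum E K (fun L => τ K L * (c₁ K - c₁ L))
        + κ * (1 - 2 * c₁₀ K)) ∧
  (∀ K : V, c₁ K + c₂ K = 1) ∧
  (∑ K : V, m K * (c₁ K * μ₁ K + c₂ K * μ₂ K) = 0)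

/-- The discrete energy `𝔈(c)`. -/
noncomputable def discreteEnergy {V : Type*} [Fintype V]
    (E : Finset (V × V)) (m : V → ℝ) (τ : V → V → ℝ)
    (α κ η₁ η₂ θ₁ θ₂ : ℝ) (Ψ₁ Ψ₂ : V → ℝ) (c₁ c₂ : V → ℝ) : ℝ :=
  α / 2 * edgeSum E (fun K L => τ K L * (c₁ K - c₁ L) ^ 2)
    + ∑ K : V, m K * (κ * c₁ K * c₂ K
        + (c₁ K * Ψ₁ K + θ₁ * η₁ * ent (c₁ K))
        + (c₂ K * Ψ₂ K + θ₂ * η₂ * ent (c₂ K)))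

/-- The discrete dissipation `𝔇(c, μ)`. -/
noncomputable def discreteDissipation {V : Type*}
    (E : Finset (V × V)) (τ : V → V → ℝ)
    (η₁ η₂ θ₁ θ₂ : ℝ) (Ψ₁ Ψ₂ : V → ℝ) (c₁ c₂ μ₁ μ₂ : V → ℝ) : ℝ :=
  edgeSum E (fun K L => τ K L * (lm (c₁ K) (c₁ L) / η₁)
      * (μ₁ K + Ψ₁ K + θ₁ * η₁ * Real.log (c₁ K)
          - μ₁ L - Ψ₁ L - θ₁ * η₁ * Real.log (c₁ L)) ^ 2)
  + edgeSum E (fun K L => τ K L * (lm (c₂ K) (c₂ L) / η₂)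
      * (μ₂ K + Ψ₂ K + θ₂ * η₂ * Real.log (c₂ K)
          - μ₂ L - Ψ₂ L - θ₂ * η₂ * Real.log (c₂ L)) ^ 2)


section AuxLemmas

lemma lm_symm (a b : ℝ) : lm a b = lm b a := by
  unfold lm
  by_cases h : a = b
  · subst h; simp
  · simp only [h, Ne.symm h, false_and, if_false, min_comm a b]
    split
    · rfl
    · rw [← neg_sub a b, ← neg_sub (Real.log a) (Real.log b), neg_div_neg_eq]

lemma lm_mul_log {a b : ℝ} (ha : 0 < a) (hb : 0 < b) :
    lm a b * (Real.log a - Real.log b) = a - b := by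
  unfold lm
  by_cases h : a = b
  · simp [h]
  · have hmin : ¬ min a b ≤ 0 := not_le.mpr (lt_min ha hb)
    have hlog : Real.log a ≠ Real.log b := fun he =>
      h (Real.log_injOn_pos (Set.mem_Ioi.mpr ha) (Set.mem_Ioi.mpr hb) he)
    simp only [h, false_and, if_false, hmin, if_false]
    rw [div_mul_cancel₀]
    exact sub_ne_zero.mpr hlog

lemma ent_sub_le {a b : ℝ} (ha : 0 < a) (hb : 0 ≤ b) :
    ent a - ent b ≤ (a - b) * Real.log a := by
  unfold ent
  rcases eq_or_lt_of_le hb with h | hb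
  · simp [← h, Real.log_zero]
    nlinarith [ha.le]
  · have key : b * (Real.log a - Real.log b) ≤ a - b := by
      have := Real.log_le_sub_one_of_pos (div_pos ha hb)
      rw [Real.log_div ha.ne' hb.ne'] at this
      calc b * (Real.log a - Real.log b) ≤ b * (a / b - 1) := by
            exact mul_le_mul_of_nonneg_left this hb.le
        _ = a - b := by field_simp
    nlinarith

lemma sum_nbr_eq {V : Type*} [Fintype V] [DecidableEq V] (E : Finset (V × V))
    (f : V → V → ℝ) :
    ∑ K, ∑ L ∈ Finset.univ.filter (fun L => (K, L) ∈ E), f K L = ∑ p ∈ E, f p.1 p.2 := by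
  classical
  rw [show E = Finset.univ.filter (fun p : V × V => (p.1, p.2) ∈ E) by ext p; simp]
  rw [Finset.sum_filter, ← Finset.univ_product_univ, Finset.sum_product]
  simp [Finset.sum_filter]

lemma sum_swap_edges {V : Type*} [DecidableEq V] (E : Finset (V × V))
    (hEsym : ∀ K L : V, (K, L) ∈ E ↔ (L, K) ∈ E) (f : V → V → ℝ) :
    ∑ p ∈ E, f p.1 p.2 = ∑ p ∈ E, f p.2 p.1 := by
  apply Finset.sum_nbij' (fun p => Prod.swap p) (fun p => Prod.swap p) <;> simp_all [hEsym]

lemma phase_dissipation {V : Type*} [Fintype V] [DecidableEq V]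
    (E : Finset (V × V)) (m : V → ℝ) (τ : V → V → ℝ)
    (hEsym : ∀ K L : V, (K, L) ∈ E ↔ (L, K) ∈ E)
    (hτsym : ∀ K L, τ K L = τ L K)
    (Δt η θ : ℝ) (hη : 0 < η) (Ψ c₀ c μ : V → ℝ)
    (hc : ∀ K, 0 < c K)
    (heq : ∀ K, m K * (c K - c₀ K) / Δt
      + nbrSum E K (fun L => τ K L * (lm (c K) (c L) / η * (μ K + Ψ K - μ L - Ψ L)
          + θ * (c K - c L))) = 0) :
    edgeSum E (fun K L => τ K L * (lm (c K) (c L) / η)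
        * (μ K + Ψ K + θ * η * Real.log (c K)
            - μ L - Ψ L - θ * η * Real.log (c L)) ^ 2)
      = - ∑ K, (μ K + Ψ K + θ * η * Real.log (c K)) * (m K * (c K - c₀ K) / Δt) := by
  classical
  set w : V → ℝ := fun K => μ K + Ψ K + θ * η * Real.log (c K) with hw
  set F : V → V → ℝ := fun K L => τ K L * (lm (c K) (c L) / η * (μ K + Ψ K - μ L - Ψ L)
          + θ * (c K - c L)) with hF
  have hFw : ∀ K L, F K L = τ K L * (lm (c K) (c L) / η) * (w K - w L) := by
    intro K L
    have := lm_mul_log (hc K) (hc L)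
    simp only [hF, hw]
    field_simp
    linear_combination (-(τ K L * θ * η)) * this
  have hFanti : ∀ K L, F L K = - F K L := by
    intro K L
    rw [hFw, hFw, hτsym L K, lm_symm (c L) (c K)]
    ring
  have h1 : ∑ K, w K * (m K * (c K - c₀ K) / Δt) + ∑ K, w K * nbrSum E K (fun L => F K L) = 0 := by
    rw [← Finset.sum_add_distrib]
    rw [show (0:ℝ) = ∑ K : V, 0 by simp]
    refine Finset.sum_congr rfl fun K _ => ?_
    rw [← mul_add, heq K, mul_zero]
  have h2 : ∑ K, w K * nbrSum E K (fun L => F K L) = ∑ p ∈ E, w p.1 * F p.1 p.2 := by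
    rw [← sum_nbr_eq E (fun K L => w K * F K L)]
    refine Finset.sum_congr rfl fun K _ => ?_
    simp [nbrSum, Finset.mul_sum]
  have h3 : ∑ p ∈ E, w p.1 * F p.1 p.2 = ∑ p ∈ E, (- (w p.2 * F p.1 p.2)) := by
    calc ∑ p ∈ E, w p.1 * F p.1 p.2 = ∑ p ∈ E, w p.2 * F p.2 p.1 :=
          sum_swap_edges E hEsym (fun K L => w K * F K L)
      _ = ∑ p ∈ E, (- (w p.2 * F p.1 p.2)) := by
          refine Finset.sum_congr rfl fun p _ => ?_
          rw [hFanti p.1 p.2]; ring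
  have h4 : ∑ p ∈ E, w p.1 * F p.1 p.2
      = (∑ p ∈ E, τ p.1 p.2 * (lm (c p.1) (c p.2) / η) * (w p.1 - w p.2) ^ 2) / 2 := by
    have : (2:ℝ) * ∑ p ∈ E, w p.1 * F p.1 p.2
        = ∑ p ∈ E, τ p.1 p.2 * (lm (c p.1) (c p.2) / η) * (w p.1 - w p.2) ^ 2 := by
      calc (2:ℝ) * ∑ p ∈ E, w p.1 * F p.1 p.2
          = ∑ p ∈ E, w p.1 * F p.1 p.2 + ∑ p ∈ E, (- (w p.2 * F p.1 p.2)) := by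
            rw [← h3]; ring
        _ = ∑ p ∈ E, (w p.1 - w p.2) * F p.1 p.2 := by
            rw [← Finset.sum_add_distrib]
            exact Finset.sum_congr rfl fun p _ => by ring
        _ = _ := by
            refine Finset.sum_congr rfl fun p _ => ?_
            rw [hFw]; ring
    linarith
  have h5 := h1
  rw [h2, h4] at h5
  have hsum : ∑ p ∈ E, τ p.1 p.2 * (lm (c p.1) (c p.2) / η) * (w p.1 - w p.2) ^ 2
      = ∑ p ∈ E, τ p.1 p.2 * (lm (c p.1) (c p.2) / η)
        * (μ p.1 + Ψ p.1 + θ * η * Real.log (c p.1)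
            - μ p.2 - Ψ p.2 - θ * η * Real.log (c p.2)) ^ 2 :=
    Finset.sum_congr rfl fun p _ => by simp only [hw]; ring
  simp only [edgeSum]
  rw [← hsum]
  linarith

end AuxLemmas

/-- Discrete energy / energy dissipation inequality. -/
theorem energy_dissipation_one_step
    {V : Type*} [Fintype V] [DecidableEq V] [Nonempty V]
    (E : Finset (V × V)) (m : V → ℝ) (τ : V → V → ℝ)
    (Δt α κ η₁ η₂ θ₁ θ₂ : ℝ) (Ψ₁ Ψ₂ : V → ℝ)
    (c₁₀ c₂₀ c₁ c₂ μ₁ μ₂ : V → ℝ)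
    (hEirr : ∀ K : V, (K, K) ∉ E)
    (hEsym : ∀ K L : V, (K, L) ∈ E ↔ (L, K) ∈ E)
    (hconn : (SimpleGraph.fromRel (fun K L : V => (K, L) ∈ E)).Connected)
    (hm : ∀ K, 0 < m K)
    (hτpos : ∀ K L, (K, L) ∈ E → 0 < τ K L)
    (hτsym : ∀ K L, τ K L = τ L K)
    (hΔt : 0 < Δt) (hα : 0 < α) (hκ : 0 < κ)
    (hη₁ : 0 < η₁) (hη₂ : 0 < η₂) (hθ₁ : 0 < θ₁) (hθ₂ : 0 < θ₂)
    (hc₁₀ : ∀ K, c₁₀ K ∈ Set.Icc (0:ℝ) 1)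
    (hc₂₀ : ∀ K, c₂₀ K ∈ Set.Icc (0:ℝ) 1)
    (hc₀sum : ∀ K, c₁₀ K + c₂₀ K = 1)
    (hsol : OneStepScheme E m τ Δt α κ η₁ η₂ θ₁ θ₂ Ψ₁ Ψ₂ c₁₀ c₂₀ c₁ c₂ μ₁ μ₂)
    (hpos : ∀ K : V, 0 < c₁ K ∧ 0 < c₂ K) :
    (discreteEnergy E m τ α κ η₁ η₂ θ₁ θ₂ Ψ₁ Ψ₂ c₁ c₂
        - discreteEnergy E m τ α κ η₁ η₂ θ₁ θ₂ Ψ₁ Ψ₂ c₁₀ c₂₀) / Δt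
      + discreteDissipation E τ η₁ η₂ θ₁ θ₂ Ψ₁ Ψ₂ c₁ c₂ μ₁ μ₂ ≤ 0 := by
  classical
  obtain ⟨hi1, hi2, hii, hiii, _⟩ := hsol
  have hc1 : ∀ K, 0 < c₁ K := fun K => (hpos K).1
  have hc2 : ∀ K, 0 < c₂ K := fun K => (hpos K).2
  -- dissipation identities
  have hD1 := phase_dissipation E m τ hEsym hτsym Δt η₁ θ₁ hη₁ Ψ₁ c₁₀ c₁ μ₁ hc1 hi1
  have hD2 := phase_dissipation E m τ hEsym hτsym Δt η₂ θ₂ hη₂ Ψ₂ c₂₀ c₂ μ₂ hc2 hi2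
  set w₁ : V → ℝ := fun K => μ₁ K + Ψ₁ K + θ₁ * η₁ * Real.log (c₁ K) with hw₁
  set w₂ : V → ℝ := fun K => μ₂ K + Ψ₂ K + θ₂ * η₂ * Real.log (c₂ K) with hw₂
  set R : ℝ := ∑ K, (w₁ K * (m K * (c₁ K - c₁₀ K)) + w₂ K * (m K * (c₂ K - c₂₀ K))) with hR
  have hDis : discreteDissipation E τ η₁ η₂ θ₁ θ₂ Ψ₁ Ψ₂ c₁ c₂ μ₁ μ₂ = - (R / Δt) := by
    rw [discreteDissipation, hD1, hD2]
    have hsum1 : ∑ K, (μ₁ K + Ψ₁ K + θ₁ * η₁ * Real.log (c₁ K)) * (m K * (c₁ K - c₁₀ K) / Δt)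
        = (∑ K, w₁ K * (m K * (c₁ K - c₁₀ K))) / Δt := by
      rw [Finset.sum_div]
      exact Finset.sum_congr rfl fun K _ => by simp only [hw₁]; ring
    have hsum2 : ∑ K, (μ₂ K + Ψ₂ K + θ₂ * η₂ * Real.log (c₂ K)) * (m K * (c₂ K - c₂₀ K) / Δt)
        = (∑ K, w₂ K * (m K * (c₂ K - c₂₀ K))) / Δt := by
      rw [Finset.sum_div]
      exact Finset.sum_congr rfl fun K _ => by simp only [hw₂]; ring
    rw [hsum1, hsum2, hR, Finset.sum_add_distrib]
    ring
  -- the energy inequality E(c) - E(c⁰) ≤ R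
  have hd2 : ∀ K, c₂ K - c₂₀ K = -(c₁ K - c₁₀ K) := by
    intro K; have := hiii K; have := hc₀sum K; linarith
  -- chemical-potential part
  set G : ℝ := ∑ K, (c₁ K - c₁₀ K) * nbrSum E K (fun L => τ K L * (c₁ K - c₁ L)) with hG
  set B : V → ℝ := fun K => m K * (κ * (c₁ K - c₁₀ K) * (1 - 2 * c₁₀ K)
      + (c₁ K - c₁₀ K) * Ψ₁ K + (c₂ K - c₂₀ K) * Ψ₂ K
      + θ₁ * η₁ * ((c₁ K - c₁₀ K) * Real.log (c₁ K))
      + θ₂ * η₂ * ((c₂ K - c₂₀ K) * Real.log (c₂ K))) with hB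
  have hRsplit : R = α * G + ∑ K, B K := by
    rw [hR, hG, Finset.mul_sum, ← Finset.sum_add_distrib]
    refine Finset.sum_congr rfl fun K _ => ?_
    have hmu : μ₁ K - μ₂ K
        = α / m K * nbrSum E K (fun L => τ K L * (c₁ K - c₁ L)) + κ * (1 - 2 * c₁₀ K) :=
      hii K
    have hmK : m K ≠ 0 := (hm K).ne'
    have : m K * ((c₁ K - c₁₀ K) * (μ₁ K - μ₂ K))
        = α * ((c₁ K - c₁₀ K) * nbrSum E K (fun L => τ K L * (c₁ K - c₁ L)))
          + m K * ((c₁ K - c₁₀ K) * (κ * (1 - 2 * c₁₀ K))) := by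
      rw [hmu]; field_simp
    simp only [hw₁, hw₂, hB]
    rw [hd2 K]
    linear_combination this
  -- gradient part bound
  have hGrad : α / 2 * edgeSum E (fun K L => τ K L * (c₁ K - c₁ L) ^ 2)
      - α / 2 * edgeSum E (fun K L => τ K L * (c₁₀ K - c₁₀ L) ^ 2) ≤ α * G := by
    have hG1 : G = ∑ p ∈ E, (c₁ p.1 - c₁₀ p.1) * (τ p.1 p.2 * (c₁ p.1 - c₁ p.2)) := by
      rw [hG, ← sum_nbr_eq E (fun K L => (c₁ K - c₁₀ K) * (τ K L * (c₁ K - c₁ L)))]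
      refine Finset.sum_congr rfl fun K _ => ?_
      simp [nbrSum, Finset.mul_sum]
    have hG2 : 2 * G = ∑ p ∈ E, ((c₁ p.1 - c₁₀ p.1) - (c₁ p.2 - c₁₀ p.2))
        * (τ p.1 p.2 * (c₁ p.1 - c₁ p.2)) := by
      have hswap : ∑ p ∈ E, (c₁ p.1 - c₁₀ p.1) * (τ p.1 p.2 * (c₁ p.1 - c₁ p.2))
          = ∑ p ∈ E, (c₁ p.2 - c₁₀ p.2) * (τ p.2 p.1 * (c₁ p.2 - c₁ p.1)) :=
        sum_swap_edges E hEsym (fun K L => (c₁ K - c₁₀ K) * (τ K L * (c₁ K - c₁ L)))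
      calc 2 * G = ∑ p ∈ E, (c₁ p.1 - c₁₀ p.1) * (τ p.1 p.2 * (c₁ p.1 - c₁ p.2))
            + ∑ p ∈ E, (c₁ p.2 - c₁₀ p.2) * (τ p.2 p.1 * (c₁ p.2 - c₁ p.1)) := by
            rw [← hswap, ← hG1]; ring
        _ = _ := by
            rw [← Finset.sum_add_distrib]
            refine Finset.sum_congr rfl fun p _ => ?_
            rw [hτsym p.2 p.1]; ring
    have hptwise : ∑ p ∈ E, τ p.1 p.2 * (c₁ p.1 - c₁ p.2) ^ 2
        - ∑ p ∈ E, τ p.1 p.2 * (c₁₀ p.1 - c₁₀ p.2) ^ 2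
        ≤ 2 * ∑ p ∈ E, ((c₁ p.1 - c₁₀ p.1) - (c₁ p.2 - c₁₀ p.2))
            * (τ p.1 p.2 * (c₁ p.1 - c₁ p.2)) := by
      rw [← Finset.sum_sub_distrib, Finset.mul_sum]
      refine Finset.sum_le_sum fun p hp => ?_
      have hτ : 0 ≤ τ p.1 p.2 := (hτpos p.1 p.2 hp).le
      nlinarith [sq_nonneg ((c₁ p.1 - c₁ p.2) - (c₁₀ p.1 - c₁₀ p.2)), hτ,
        mul_nonneg hτ (sq_nonneg ((c₁ p.1 - c₁ p.2) - (c₁₀ p.1 - c₁₀ p.2)))]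
    have h6 : ∑ p ∈ E, τ p.1 p.2 * (c₁ p.1 - c₁ p.2) ^ 2
        - ∑ p ∈ E, τ p.1 p.2 * (c₁₀ p.1 - c₁₀ p.2) ^ 2 ≤ 4 * G := by
      linarith [hptwise, hG2]
    simp only [edgeSum]
    nlinarith [mul_le_mul_of_nonneg_left h6 hα.le]
  -- potential / entropy / interaction part bound
  have hPot : ∑ K, m K * (κ * c₁ K * c₂ K
        + (c₁ K * Ψ₁ K + θ₁ * η₁ * ent (c₁ K))
        + (c₂ K * Ψ₂ K + θ₂ * η₂ * ent (c₂ K)))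
      - ∑ K, m K * (κ * c₁₀ K * c₂₀ K
        + (c₁₀ K * Ψ₁ K + θ₁ * η₁ * ent (c₁₀ K))
        + (c₂₀ K * Ψ₂ K + θ₂ * η₂ * ent (c₂₀ K)))
      ≤ ∑ K, B K := by
    rw [← Finset.sum_sub_distrib]
    refine Finset.sum_le_sum fun K _ => ?_
    have e1 := ent_sub_le (hc1 K) (hc₁₀ K).1
    have e2 := ent_sub_le (hc2 K) (hc₂₀ K).1
    have hs : c₁ K + c₂ K = 1 := hiii K
    have hs0 : c₁₀ K + c₂₀ K = 1 := hc₀sum K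
    have hinner : κ * c₁ K * c₂ K
        + (c₁ K * Ψ₁ K + θ₁ * η₁ * ent (c₁ K))
        + (c₂ K * Ψ₂ K + θ₂ * η₂ * ent (c₂ K))
        - (κ * c₁₀ K * c₂₀ K
        + (c₁₀ K * Ψ₁ K + θ₁ * η₁ * ent (c₁₀ K))
        + (c₂₀ K * Ψ₂ K + θ₂ * η₂ * ent (c₂₀ K)))
        ≤ κ * (c₁ K - c₁₀ K) * (1 - 2 * c₁₀ K)
          + (c₁ K - c₁₀ K) * Ψ₁ K + (c₂ K - c₂₀ K) * Ψ₂ K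
          + θ₁ * η₁ * ((c₁ K - c₁₀ K) * Real.log (c₁ K))
          + θ₂ * η₂ * ((c₂ K - c₂₀ K) * Real.log (c₂ K)) := by
      have t1 : θ₁ * η₁ * (ent (c₁ K) - ent (c₁₀ K))
          ≤ θ₁ * η₁ * ((c₁ K - c₁₀ K) * Real.log (c₁ K)) :=
        mul_le_mul_of_nonneg_left e1 (by positivity)
      have t2 : θ₂ * η₂ * (ent (c₂ K) - ent (c₂₀ K))
          ≤ θ₂ * η₂ * ((c₂ K - c₂₀ K) * Real.log (c₂ K)) :=
        mul_le_mul_of_nonneg_left e2 (by positivity)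
      have tκ : κ * c₁ K * c₂ K - κ * c₁₀ K * c₂₀ K
          ≤ κ * (c₁ K - c₁₀ K) * (1 - 2 * c₁₀ K) := by
        have hc2e : c₂ K = 1 - c₁ K := by linarith
        have hc20e : c₂₀ K = 1 - c₁₀ K := by linarith
        rw [hc2e, hc20e]
        nlinarith [mul_nonneg hκ.le (sq_nonneg (c₁ K - c₁₀ K))]
      linarith
    rw [hB]
    calc m K * (κ * c₁ K * c₂ K
        + (c₁ K * Ψ₁ K + θ₁ * η₁ * ent (c₁ K))
        + (c₂ K * Ψ₂ K + θ₂ * η₂ * ent (c₂ K)))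
        - m K * (κ * c₁₀ K * c₂₀ K
        + (c₁₀ K * Ψ₁ K + θ₁ * η₁ * ent (c₁₀ K))
        + (c₂₀ K * Ψ₂ K + θ₂ * η₂ * ent (c₂₀ K)))
        = m K * ((κ * c₁ K * c₂ K
        + (c₁ K * Ψ₁ K + θ₁ * η₁ * ent (c₁ K))
        + (c₂ K * Ψ₂ K + θ₂ * η₂ * ent (c₂ K)))
        - (κ * c₁₀ K * c₂₀ K
        + (c₁₀ K * Ψ₁ K + θ₁ * η₁ * ent (c₁₀ K))
        + (c₂₀ K * Ψ₂ K + θ₂ * η₂ * ent (c₂₀ K)))) := by ring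
      _ ≤ _ := mul_le_mul_of_nonneg_left hinner (hm K).le
  have hE : discreteEnergy E m τ α κ η₁ η₂ θ₁ θ₂ Ψ₁ Ψ₂ c₁ c₂
      - discreteEnergy E m τ α κ η₁ η₂ θ₁ θ₂ Ψ₁ Ψ₂ c₁₀ c₂₀ ≤ R := by
    rw [discreteEnergy, discreteEnergy, hRsplit]
    have := hGrad
    have := hPot
    linarith
  rw [hDis]
  have h0 : 0 ≤ (R - (discreteEnergy E m τ α κ η₁ η₂ θ₁ θ₂ Ψ₁ Ψ₂ c₁ c₂
      - discreteEnergy E m τ α κ η₁ η₂ θ₁ θ₂ Ψ₁ Ψ₂ c₁₀ c₂₀)) / Δt :=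
    div_nonneg (by linarith) hΔt.le
  rw [sub_div] at h0
  linarith
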